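/- For τ ∈ ℝ and finitely supported v, w : ℤ^d → ℂ, let R_τ(v, w) denote the relation: for every k ∈ ℤ^d, w_k = e^{−iτ|k|²} v_k − i(τ/2) e^{−iτ|k|²} Σ_{−k₁+k₂+k₃=k} φ₁(2iτ|k₁|²) · conj(v_{k₁}) v_{k₂} v_{k₃} − i(τ/2) Σ_{−k₁+k₂+k₃=k} φ₁(−2iτ|k₁|²) · conj(w_{k₁}) w_{k₂} w_{k₃}. Then the one-step relation R is symmetric: for all τ ∈ ℝ and all finitely supported v, w : ℤ^d → ℂ, R_τ(v, w) holds if and only if R_{−τ}(w, v) holds. -/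
import Mathlib


/-- `φ₁(z) = (exp z - 1)/z` for `z ≠ 0`, `φ₁(0) = 1`. -/
noncomputable def phi1 (z : ℂ) : ℂ := if z = 0 then 1 else (Complex.exp z - 1) / z

/-- `|k|² = k·k` for a frequency `k ∈ ℤ^d`, as a complex number. -/
noncomputable def nsq {d : ℕ} (k : Fin d → ℤ) : ℂ := ∑ i, ((k i : ℂ)) ^ 2

/-- One step of the symmetrised first-order low-regularity integrator for the cubic
nonlinear Schrödinger equation on `𝕋^d`, in Fourier coordinates: `nlsSym1R τ v w`
holds iff for every `k ∈ ℤ^d`,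
`w_k = e^{-iτ|k|²} v_k - i(τ/2) e^{-iτ|k|²} Σ_{-k₁+k₂+k₃=k} φ₁(2iτ|k₁|²) conj(v_{k₁}) v_{k₂} v_{k₃}
      - i(τ/2) Σ_{-k₁+k₂+k₃=k} φ₁(-2iτ|k₁|²) conj(w_{k₁}) w_{k₂} w_{k₃}`,
where the convolution constraint `-k₁+k₂+k₃ = k` has been solved as `k₃ = k + k₁ - k₂`. -/
noncomputable def nlsSym1R {d : ℕ} (τ : ℝ) (v w : (Fin d → ℤ) →₀ ℂ) : Prop :=
  ∀ k : Fin d → ℤ,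
    w k = Complex.exp (-(Complex.I * (τ : ℂ) * nsq k)) * v k
      - Complex.I * ((τ : ℂ) / 2) * Complex.exp (-(Complex.I * (τ : ℂ) * nsq k)) *
          (∑ᶠ k₁ : Fin d → ℤ, ∑ᶠ k₂ : Fin d → ℤ,
            phi1 (2 * Complex.I * (τ : ℂ) * nsq k₁) *
              ((starRingEnd ℂ) (v k₁) * v k₂ * v (k + k₁ - k₂)))
      - Complex.I * ((τ : ℂ) / 2) *
          (∑ᶠ k₁ : Fin d → ℤ, ∑ᶠ k₂ : Fin d → ℤ,
            phi1 (-(2 * Complex.I * (τ : ℂ) * nsq k₁)) *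
              ((starRingEnd ℂ) (w k₁) * w k₂ * w (k + k₁ - k₂)))

lemma arg1 (τ : ℝ) {d : ℕ} (k₁ : Fin d → ℤ) :
    2 * Complex.I * ((-τ : ℝ) : ℂ) * nsq k₁ = -(2 * Complex.I * (τ : ℂ) * nsq k₁) := by
  push_cast; ring

lemma arg2 (τ : ℝ) {d : ℕ} (k₁ : Fin d → ℤ) :
    -(2 * Complex.I * ((-τ : ℝ) : ℂ) * nsq k₁) = 2 * Complex.I * (τ : ℂ) * nsq k₁ := by
  push_cast; ring

lemma arg3 (τ : ℝ) {d : ℕ} (k : Fin d → ℤ) :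
    -(Complex.I * ((-τ : ℝ) : ℂ) * nsq k) = Complex.I * (τ : ℂ) * nsq k := by
  push_cast; ring

/-- The one-step relation of the symmetrised first-order low-regularity NLS integrator
is symmetric: `R_τ(v, w)` holds iff `R_{-τ}(w, v)` holds. -/
theorem nlsSym1R_symmetric {d : ℕ} (τ : ℝ) (v w : (Fin d → ℤ) →₀ ℂ) :
    nlsSym1R τ v w ↔ nlsSym1R (-τ) w v := by
  unfold nlsSym1R
  constructor <;> intro h k <;> have hk := h k <;>
    have hE : Complex.exp (-(Complex.I * (τ : ℂ) * nsq k)) *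
        Complex.exp (Complex.I * (τ : ℂ) * nsq k) = 1 := by
      rw [← Complex.exp_add, neg_add_cancel, Complex.exp_zero]
  · simp only [arg1, arg2, arg3, neg_neg] at *
    rw [hk]
    push_cast
    linear_combination (Complex.I * ((τ : ℂ)/2) *
      (∑ᶠ k₁ : Fin d → ℤ, ∑ᶠ k₂ : Fin d → ℤ,
        phi1 (2 * Complex.I * (τ : ℂ) * nsq k₁) *
          ((starRingEnd ℂ) (v k₁) * v k₂ * v (k + k₁ - k₂))) - v k) * hE
  · simp only [arg1, arg2, arg3, neg_neg] at *
    rw [hk]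
    push_cast at *
    linear_combination (-(w k) - Complex.I * ((τ : ℂ)/2) *
      (∑ᶠ k₁ : Fin d → ℤ, ∑ᶠ k₂ : Fin d → ℤ,
        phi1 (-(2 * Complex.I * (τ : ℂ) * nsq k₁)) *
          ((starRingEnd ℂ) (w k₁) * w k₂ * w (k + k₁ - k₂)))) * hE
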